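/- Suppose w₁, w₂, w₃ solve the classical Darboux–Halphen system w₁' = w₁(w₂+w₃) − w₂w₃, w₂' = w₂(w₃+w₁) − w₃w₁, w₃' = w₃(w₁+w₂) − w₁w₂. Then y := 2(w₁+w₂+w₃) satisfies the Chazy equation y''' = 2yy'' − 3(y')²; moreover y' = 2(w₁w₂+w₂w₃+w₃w₁) and y'' = 12w₁w₂w₃. -/

import Mathlib

/-- If `w₁, w₂, w₃` solve the classical Darboux–Halphen system, then
`y := 2(w₁+w₂+w₃)` satisfies the Chazy equation `y''' = 2yy'' − 3(y')²`; moreover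
`y' = 2(w₁w₂+w₂w₃+w₃w₁)` and `y'' = 12w₁w₂w₃`. -/
theorem darboux_halphen_to_chazy (w1 w2 w3 : ℂ → ℂ)
    (h1 : Differentiable ℂ w1) (h2 : Differentiable ℂ w2) (h3 : Differentiable ℂ w3)
    (hd1 : ∀ z : ℂ, deriv w1 z = w1 z * (w2 z + w3 z) - w2 z * w3 z)
    (hd2 : ∀ z : ℂ, deriv w2 z = w2 z * (w3 z + w1 z) - w3 z * w1 z)
    (hd3 : ∀ z : ℂ, deriv w3 z = w3 z * (w1 z + w2 z) - w1 z * w2 z) :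
    let y : ℂ → ℂ := fun z => 2 * (w1 z + w2 z + w3 z)
    (∀ z : ℂ, deriv y z = 2 * (w1 z * w2 z + w2 z * w3 z + w3 z * w1 z)) ∧
    (∀ z : ℂ, deriv (deriv y) z = 12 * (w1 z * w2 z * w3 z)) ∧
    (∀ z : ℂ, deriv (deriv (deriv y)) z =
      2 * y z * deriv (deriv y) z - 3 * (deriv y z) ^ 2) := by
  intro y
  have hy1 : deriv y = fun z => 2 * (w1 z * w2 z + w2 z * w3 z + w3 z * w1 z) := by
    funext z
    have : deriv y z = 2 * (deriv w1 z + deriv w2 z + deriv w3 z) := by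
      show deriv (fun z => 2 * (w1 z + w2 z + w3 z)) z = _
      rw [deriv_const_mul _ (((h1 z).fun_add (h2 z)).fun_add (h3 z)),
        deriv_fun_add ((h1 z).fun_add (h2 z)) (h3 z), deriv_fun_add (h1 z) (h2 z)]
    rw [this, hd1 z, hd2 z, hd3 z]; ring
  have hy2 : deriv (deriv y) = fun z => 12 * (w1 z * w2 z * w3 z) := by
    funext z
    rw [hy1]
    have : deriv (fun z => 2 * (w1 z * w2 z + w2 z * w3 z + w3 z * w1 z)) z =
        2 * ((deriv w1 z * w2 z + w1 z * deriv w2 z) +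
          (deriv w2 z * w3 z + w2 z * deriv w3 z) +
          (deriv w3 z * w1 z + w3 z * deriv w1 z)) := by
      rw [deriv_const_mul _ ((((h1 z).fun_mul (h2 z)).fun_add ((h2 z).fun_mul (h3 z))).fun_add
          ((h3 z).fun_mul (h1 z))),
        deriv_fun_add (((h1 z).fun_mul (h2 z)).fun_add ((h2 z).fun_mul (h3 z))) ((h3 z).fun_mul (h1 z)),
        deriv_fun_add ((h1 z).fun_mul (h2 z)) ((h2 z).fun_mul (h3 z)),
        deriv_fun_mul (h1 z) (h2 z), deriv_fun_mul (h2 z) (h3 z), deriv_fun_mul (h3 z) (h1 z)]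
    rw [this, hd1 z, hd2 z, hd3 z]; ring
  refine ⟨fun z => by rw [hy1], fun z => by rw [hy2], fun z => ?_⟩
  rw [hy2, hy1]
  have : deriv (fun z => 12 * (w1 z * w2 z * w3 z)) z =
      12 * ((deriv w1 z * w2 z + w1 z * deriv w2 z) * w3 z +
        w1 z * w2 z * deriv w3 z) := by
    rw [deriv_const_mul _ (((h1 z).fun_mul (h2 z)).fun_mul (h3 z)),
      deriv_fun_mul ((h1 z).fun_mul (h2 z)) (h3 z), deriv_fun_mul (h1 z) (h2 z)]
  rw [this, hd1 z, hd2 z, hd3 z]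
  show _ = 2 * (2 * (w1 z + w2 z + w3 z)) * _ - _
  ring
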